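/- For every unit vector n in R^3, every wall temperature T_w > 0, every r_perp in (0,1], every r_parallel in (0,2), and every u in R^3 with n·u > 0, the Cercignani–Lampis scattering kernel is normalized: the integral of R(u→v) over the set {v in R^3 : n·v < 0} (with respect to Lebesgue measure dv) equals 1. -/

import Mathlib

open MeasureTheory Real

/-- Modified Bessel function of the first kind of order zero,
`I₀(y) = (1/π) ∫_0^π e^{y cos φ} dφ`. -/
noncomputable def besselI0 (y : ℝ) : ℝ :=
  (1 / Real.pi) * ∫ φ in (0:ℝ)..Real.pi, Real.exp (y * Real.cos φ)

/-- The Cercignani–Lampis scattering kernel `R(u → v)` with unit normal `n`,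
wall temperature `Tw` and accommodation coefficients `rPerp`, `rPar`. -/
noncomputable def CLkernel (n : EuclideanSpace ℝ (Fin 3)) (Tw rPerp rPar : ℝ)
    (u v : EuclideanSpace ℝ (Fin 3)) : ℝ :=
  (2 / (Real.pi * rPerp * rPar * (2 - rPar))) * (|(inner ℝ n v : ℝ)| / (2 * Tw) ^ 2) *
    Real.exp (-(1 / (2 * Tw)) *
      (((inner ℝ n v : ℝ) ^ 2 + (1 - rPerp) * (inner ℝ n u : ℝ) ^ 2) / rPerp
        + ‖(v - (inner ℝ n v : ℝ) • n) - (1 - rPar) • (u - (inner ℝ n u : ℝ) • n)‖ ^ 2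
            / (rPar * (2 - rPar)))) *
    besselI0 (Real.sqrt (1 - rPerp) * (inner ℝ n v : ℝ) * (inner ℝ n u : ℝ) / (Tw * rPerp))


open Set

lemma besselI0_neg (y : ℝ) : besselI0 (-y) = besselI0 y := by
  unfold besselI0
  congr 1
  have := intervalIntegral.integral_comp_sub_left (a := (0:ℝ)) (b := Real.pi)
    (fun t => Real.exp (y * Real.cos t)) Real.pi
  simp only [Real.cos_pi_sub, sub_zero, sub_self] at this
  rw [← this]
  congr 1; ext x; ring_nf

lemma integral_Ioo_exp_cos (y : ℝ) :
    ∫ θ in Ioo (-Real.pi) Real.pi, Real.exp (y * Real.cos θ)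
      = 2 * Real.pi * besselI0 y := by
  rw [Measure.restrict_congr_set Ioo_ae_eq_Ioc, ← intervalIntegral.integral_of_le
    (by linarith [Real.pi_pos] : -Real.pi ≤ Real.pi)]
  have hsplit := intervalIntegral.integral_add_adjacent_intervals
    (a := -Real.pi) (b := 0) (c := Real.pi) (μ := volume) (f := fun θ => Real.exp (y * Real.cos θ))
    (by apply Continuous.intervalIntegrable; continuity)
    (by apply Continuous.intervalIntegrable; continuity)
  rw [← hsplit]
  have hneg : (∫ θ in (-Real.pi)..0, Real.exp (y * Real.cos θ))
      = ∫ θ in (0:ℝ)..Real.pi, Real.exp (y * Real.cos θ) := by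
    have := intervalIntegral.integral_comp_neg (a := (0:ℝ)) (b := Real.pi)
      (fun t => Real.exp (y * Real.cos t))
    simp only [Real.cos_neg, neg_zero] at this
    rw [← this]
  rw [hneg, besselI0]
  have hπ : Real.pi ≠ 0 := Real.pi_ne_zero
  field_simp
  ring

lemma gauss_shift (b a : ℝ) :
    ∫ x : ℝ, Real.exp (-(b * (x - a) ^ 2)) = Real.sqrt (π / b) := by
  rw [show (fun x : ℝ => Real.exp (-(b * (x - a) ^ 2)))
      = (fun x : ℝ => Real.exp (-(b * x ^ 2))) ∘ (fun x => x - a) by ext x; simp]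
  rw [Function.comp_def, integral_sub_right_eq_self (μ := volume) (fun x : ℝ => Real.exp (-(b * x ^ 2))) a]
  simpa [neg_mul] using integral_gaussian b

lemma gauss2d (b ν : ℝ) (hb : 0 < b) :
    ∫ p : ℝ × ℝ, Real.exp (-(b * ((p.1 - ν) ^ 2 + p.2 ^ 2))) = π / b := by
  have : ∀ p : ℝ × ℝ, Real.exp (-(b * ((p.1 - ν) ^ 2 + p.2 ^ 2)))
      = Real.exp (-(b * (p.1 - ν) ^ 2)) * Real.exp (-(b * (p.2 - 0) ^ 2)) := by
    intro p; rw [← Real.exp_add]; ring_nf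
  simp only [this]
  rw [Measure.volume_eq_prod, integral_prod_mul (f := fun x : ℝ => Real.exp (-(b * (x - ν) ^ 2))) (g := fun x : ℝ => Real.exp (-(b * (x - 0) ^ 2))), gauss_shift, gauss_shift]
  exact Real.mul_self_sqrt (le_of_lt (div_pos Real.pi_pos hb))

-- integrability of |x| e^{-b(x-ν)^2} on ℝ
lemma integrable_abs_gauss (b ν : ℝ) (hb : 0 < b) :
    Integrable (fun x : ℝ => |x| * Real.exp (-(b * (x - ν) ^ 2))) := by
  have h1 : Integrable (fun x : ℝ => |x| * Real.exp (-b * x ^ 2)) := by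
    have := (integrable_rpow_mul_exp_neg_mul_sq hb (by norm_num : (-1:ℝ) < 1)).abs
    apply this.congr
    filter_upwards with x
    rw [abs_mul, abs_of_pos (Real.exp_pos _)]
    congr 1
    rw [Real.rpow_one]
  have h2 : Integrable (fun x : ℝ => (|x| + |ν|) * Real.exp (-b * x ^ 2)) := by
    refine (h1.add ((integrable_exp_neg_mul_sq hb).const_mul |ν|)).congr ?_
    filter_upwards with x
    simp only [Pi.add_apply]; ring
  have h3 : Integrable (fun x : ℝ => (|x + ν|) * Real.exp (-b * x ^ 2)) := by
    apply h2.mono'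
    · apply Continuous.aestronglyMeasurable; continuity
    · filter_upwards with x
      rw [norm_mul, norm_of_nonneg (le_of_lt (Real.exp_pos _)), Real.norm_eq_abs, abs_abs]
      exact mul_le_mul_of_nonneg_right ((abs_add_le x ν).trans (by rfl))
        (le_of_lt (Real.exp_pos _))
  have h4 := h3.comp_sub_right ν
  apply h4.congr
  filter_upwards with x
  simp [sub_add_cancel, neg_mul]

lemma rice (s ν : ℝ) (hs : 0 < s) (hν : 0 ≤ ν) :
    ∫ r in Ioi (0:ℝ), r * Real.exp (-((r^2 + ν^2)/s)) * besselI0 (2*r*ν/s) = s/2 := by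
  have hb : 0 < 1/s := by positivity
  set b : ℝ := 1/s with hbdef
  -- polar coordinates
  have hpolar := integral_comp_polarCoord_symm
    (fun p : ℝ × ℝ => Real.exp (-(b * ((p.1 - ν) ^ 2 + p.2 ^ 2))))
  rw [gauss2d b ν hb] at hpolar
  -- rewrite the polar-side integrand
  have hset : polarCoord.target = Ioi (0:ℝ) ×ˢ Ioo (-π) π := rfl
  have hgeq : ∀ p : ℝ × ℝ,
      p.1 • Real.exp (-(b * (((polarCoord.symm p).1 - ν) ^ 2 + (polarCoord.symm p).2 ^ 2)))
        = p.1 * Real.exp (-(b * (p.1^2 + ν^2))) * Real.exp ((2*b*ν*p.1) * Real.cos p.2) := by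
    intro p
    rw [polarCoord_symm_apply, smul_eq_mul]
    have h1 : ((p.1 * Real.cos p.2 - ν) ^ 2 + (p.1 * Real.sin p.2) ^ 2)
        = p.1^2 + ν^2 - 2*ν*p.1*Real.cos p.2 := by
      have := Real.sin_sq_add_cos_sq p.2
      nlinarith [this]
    have h2 : -(b * (p.1 ^ 2 + ν ^ 2 - 2 * ν * p.1 * Real.cos p.2))
        = -(b * (p.1^2 + ν^2)) + 2*b*ν*p.1 * Real.cos p.2 := by ring
    rw [h1, h2, Real.exp_add]
    ring
  simp only [hgeq, hset] at hpolar
  -- integrability on the product set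
  have hint : IntegrableOn
      (fun p : ℝ × ℝ => p.1 * Real.exp (-(b * (p.1^2 + ν^2))) * Real.exp ((2*b*ν*p.1) * Real.cos p.2))
      (Ioi (0:ℝ) ×ˢ Ioo (-π) π) volume := by
    have hM : IntegrableOn
        (fun p : ℝ × ℝ => |p.1| * Real.exp (-(b * (p.1 - ν) ^ 2)) * 1)
        (Ioi (0:ℝ) ×ˢ Ioo (-π) π) volume := by
      rw [IntegrableOn, Measure.volume_eq_prod, ← Measure.prod_restrict]
      exact ((integrable_abs_gauss b ν hb).restrict).mul_prod
        (integrableOn_const (μ := volume) (s := Ioo (-π) π) (C := (1:ℝ))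
          (by rw [Real.volume_Ioo]; exact ENNReal.ofReal_ne_top)
          : Integrable (fun _ : ℝ => (1:ℝ)) (volume.restrict (Ioo (-π) π)))
    apply hM.mono'
    · apply Continuous.aestronglyMeasurable; fun_prop
    · rw [ae_restrict_iff' (measurableSet_Ioi.prod measurableSet_Ioo)]
      filter_upwards with p hp
      obtain ⟨hp1, _⟩ := hp
      have hp1' : (0:ℝ) < p.1 := hp1
      rw [mul_one, Real.norm_eq_abs, abs_mul, abs_mul, abs_of_pos (Real.exp_pos _),
        abs_of_pos (Real.exp_pos _), abs_of_pos hp1']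
      have : p.1 * (Real.exp (-(b * (p.1^2 + ν^2))) * Real.exp (2*b*ν*p.1 * Real.cos p.2))
          ≤ p.1 * Real.exp (-(b * (p.1 - ν) ^ 2)) := by
        apply mul_le_mul_of_nonneg_left _ (le_of_lt hp1')
        rw [← Real.exp_add]
        apply Real.exp_le_exp.2
        have hcos := Real.cos_le_one p.2
        nlinarith [mul_nonneg (mul_nonneg (le_of_lt hb) hν) (le_of_lt hp1')]
      calc p.1 * Real.exp (-(b * (p.1^2 + ν^2))) * Real.exp (2*b*ν*p.1 * Real.cos p.2)
          = p.1 * (Real.exp (-(b * (p.1^2 + ν^2))) * Real.exp (2*b*ν*p.1 * Real.cos p.2)) := by ring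
        _ ≤ p.1 * Real.exp (-(b * (p.1 - ν) ^ 2)) := this
  -- Fubini
  rw [Measure.volume_eq_prod, setIntegral_prod _ (by rwa [Measure.volume_eq_prod] at hint)] at hpolar
  -- inner integral
  have hinner : ∀ r : ℝ,
      (∫ θ in Ioo (-π) π, r * Real.exp (-(b * (r^2 + ν^2))) * Real.exp ((2*b*ν*r) * Real.cos θ))
        = r * Real.exp (-(b * (r^2 + ν^2))) * (2 * π * besselI0 (2*b*ν*r)) := by
    intro r
    rw [integral_const_mul, integral_Ioo_exp_cos]
  simp only [hinner] at hpolar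
  -- extract constant 2π
  have h2π : (0:ℝ) < 2 * π := by positivity
  have : (∫ r in Ioi (0:ℝ), r * Real.exp (-(b * (r^2 + ν^2))) * (2 * π * besselI0 (2*b*ν*r)))
      = (2 * π) * ∫ r in Ioi (0:ℝ), r * Real.exp (-(b * (r^2 + ν^2))) * besselI0 (2*b*ν*r) := by
    rw [← integral_const_mul]
    congr 1; ext r; ring
  rw [this] at hpolar
  have hval : (∫ r in Ioi (0:ℝ), r * Real.exp (-(b * (r^2 + ν^2))) * besselI0 (2*b*ν*r))
      = s / 2 := by
    have : π / b = 2 * π * (s/2) := by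
      rw [hbdef]; field_simp
    rw [this] at hpolar
    exact mul_left_cancel₀ (ne_of_gt h2π) hpolar
  rw [← hval]
  congr 1
  ext r
  have e1 : -((r^2+ν^2)/s) = -(b*(r^2+ν^2)) := by rw [hbdef]; ring
  have e2 : 2*r*ν/s = 2*b*ν*r := by rw [hbdef]; ring
  rw [e1, e2]

lemma perp_integral (Tw rPerp u0 : ℝ) (hTw : 0 < Tw) (hrPerp : 0 < rPerp)
    (hrPerp' : rPerp ≤ 1) (hu0 : 0 < u0) :
    ∫ t in Iio (0:ℝ), |t| * Real.exp (-(1/(2*Tw)) * ((t^2 + (1-rPerp)*u0^2)/rPerp))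
      * besselI0 (Real.sqrt (1-rPerp) * t * u0 / (Tw * rPerp)) = Tw * rPerp := by
  set ν : ℝ := Real.sqrt (1-rPerp) * u0 with hν
  have hν0 : 0 ≤ ν := mul_nonneg (Real.sqrt_nonneg _) hu0.le
  have hs : (0:ℝ) < 2*Tw*rPerp := by positivity
  have hsq : Real.sqrt (1-rPerp) ^ 2 = 1 - rPerp := Real.sq_sqrt (by linarith)
  -- change Iio to reflected Ioi
  have hrefl := integral_comp_neg_Ioi (c := (0:ℝ))
    (f := fun t => |t| * Real.exp (-(1/(2*Tw)) * ((t^2 + (1-rPerp)*u0^2)/rPerp))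
      * besselI0 (Real.sqrt (1-rPerp) * t * u0 / (Tw * rPerp)))
  rw [neg_zero] at hrefl
  rw [Measure.restrict_congr_set Iio_ae_eq_Iic, ← hrefl]
  have heq : ∀ r ∈ Ioi (0:ℝ),
      |(-r)| * Real.exp (-(1/(2*Tw)) * (((-r)^2 + (1-rPerp)*u0^2)/rPerp))
        * besselI0 (Real.sqrt (1-rPerp) * (-r) * u0 / (Tw * rPerp))
      = r * Real.exp (-((r^2 + ν^2)/(2*Tw*rPerp))) * besselI0 (2*r*ν/(2*Tw*rPerp)) := by
    intro r hr
    have h1 : |(-r)| = r := by rw [abs_neg, abs_of_pos hr]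
    have h2 : -(1/(2*Tw)) * (((-r)^2 + (1-rPerp)*u0^2)/rPerp)
        = -((r^2 + ν^2)/(2*Tw*rPerp)) := by
      rw [hν, mul_pow, hsq]; field_simp
    have h3 : Real.sqrt (1-rPerp) * (-r) * u0 / (Tw * rPerp)
        = -(2*r*ν/(2*Tw*rPerp)) := by
      rw [hν]; field_simp
    rw [h1, h2, h3, besselI0_neg]
  rw [setIntegral_congr_fun measurableSet_Ioi heq, rice _ _ hs hν0]
  ring

/-- Normalization of the Cercignani–Lampis kernel:
`∫_{n·v<0} R(u→v) dv = 1` for every incoming `u` with `n·u > 0`. -/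
theorem CL_normalization (n : EuclideanSpace ℝ (Fin 3)) (hn : ‖n‖ = 1)
    (Tw : ℝ) (hTw : 0 < Tw) (rPerp rPar : ℝ)
    (hrPerp : 0 < rPerp) (hrPerp' : rPerp ≤ 1)
    (hrPar : 0 < rPar) (hrPar' : rPar < 2)
    (u : EuclideanSpace ℝ (Fin 3)) (hu : 0 < (inner ℝ n u : ℝ)) :
    ∫ v in {v : EuclideanSpace ℝ (Fin 3) | (inner ℝ n v : ℝ) < 0},
      CLkernel n Tw rPerp rPar u v = 1 := by
  -- orthonormal basis with first vector n
  have hcard : Module.finrank ℝ (EuclideanSpace ℝ (Fin 3)) = Fintype.card (Fin 3) := by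
    simp [finrank_euclideanSpace]
  have horth : Orthonormal ℝ (({0} : Set (Fin 3)).restrict (fun _ : Fin 3 => n)) := by
    constructor
    · intro i; exact hn
    · intro i j hij
      exact absurd (Subtype.ext (by
        have hi := i.2; have hj := j.2
        simp only [Set.mem_singleton_iff] at hi hj
        rw [hi, hj])) hij
  obtain ⟨bas, hbas⟩ := horth.exists_orthonormalBasis_extension_of_card_eq hcard
  have hb0 : bas 0 = n := hbas 0 rfl
  have hinn : ∀ v : EuclideanSpace ℝ (Fin 3), (inner ℝ n v : ℝ) = bas.repr v 0 := by
    intro v; rw [OrthonormalBasis.repr_apply_apply, hb0]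
  have hrn : bas.repr n = EuclideanSpace.single 0 (1:ℝ) := by
    rw [← hb0, OrthonormalBasis.repr_self]
  -- names
  set u0 : ℝ := (inner ℝ n u : ℝ) with hu0def
  set a1 : ℝ := (1 - rPar) * bas.repr u 1 with ha1def
  set a2 : ℝ := (1 - rPar) * bas.repr u 2 with ha2def
  -- tangential norm in coordinates
  have htan : ∀ v : EuclideanSpace ℝ (Fin 3),
      ‖(v - (inner ℝ n v : ℝ) • n) - (1 - rPar) • (u - (inner ℝ n u : ℝ) • n)‖ ^ 2
        = (bas.repr v 1 - a1) ^ 2 + (bas.repr v 2 - a2) ^ 2 := by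
    intro v
    rw [← bas.repr.norm_map]
    have hmap : bas.repr ((v - (inner ℝ n v : ℝ) • n) - (1 - rPar) • (u - (inner ℝ n u : ℝ) • n))
        = (bas.repr v - (inner ℝ n v : ℝ) • EuclideanSpace.single 0 (1:ℝ))
          - (1 - rPar) • (bas.repr u - (inner ℝ n u : ℝ) • EuclideanSpace.single 0 (1:ℝ)) := by
      simp only [map_sub, LinearIsometryEquiv.map_smul, hrn]
    rw [hmap, EuclideanSpace.norm_eq, Real.sq_sqrt (by positivity)]
    rw [Fin.sum_univ_three]
    simp only [PiLp.sub_apply, PiLp.smul_apply, EuclideanSpace.single_apply, smul_eq_mul,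
      Real.norm_eq_abs, sq_abs,
      show ((0:Fin 3) = (0:Fin 3)) = True from by simp,
      show ((1:Fin 3) = (0:Fin 3)) = False from by decide,
      show ((2:Fin 3) = (0:Fin 3)) = False from by decide,
      if_true, if_false]
    rw [hinn v, hinn u]
    ring
  -- the three 1-dimensional factors
  set C : ℝ := 2 / (Real.pi * rPerp * rPar * (2 - rPar)) / (2 * Tw) ^ 2 with hCdef
  set F1 : ℝ → ℝ := fun t => C * (|t| * Real.exp (-(1/(2*Tw)) * ((t^2 + (1-rPerp)*u0^2)/rPerp))
      * besselI0 (Real.sqrt (1-rPerp) * t * u0 / (Tw * rPerp))) with hF1def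
  set F2 : ℝ → ℝ := fun y => Real.exp (-(1/(2*Tw*rPar*(2-rPar)) * (y - a1) ^ 2)) with hF2def
  set F3 : ℝ → ℝ := fun z => Real.exp (-(1/(2*Tw*rPar*(2-rPar)) * (z - a2) ^ 2)) with hF3def
  have hfact : ∀ v : EuclideanSpace ℝ (Fin 3),
      CLkernel n Tw rPerp rPar u v
        = F1 (bas.repr v 0) * (F2 (bas.repr v 1) * F3 (bas.repr v 2)) := by
    intro v
    rw [CLkernel, htan v]
    rw [hinn v]
    have hsplit : -(1 / (2 * Tw)) *
        ((bas.repr v 0 ^ 2 + (1 - rPerp) * u0 ^ 2) / rPerp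
          + ((bas.repr v 1 - a1) ^ 2 + (bas.repr v 2 - a2) ^ 2) / (rPar * (2 - rPar)))
        = (-(1/(2*Tw)) * ((bas.repr v 0 ^2 + (1-rPerp)*u0^2)/rPerp))
          + ((-(1/(2*Tw*rPar*(2-rPar)) * (bas.repr v 1 - a1) ^ 2))
          + (-(1/(2*Tw*rPar*(2-rPar)) * (bas.repr v 2 - a2) ^ 2))) := by
      have h2Tw : (2*Tw) ≠ 0 := by positivity
      have hrp : rPerp ≠ 0 := ne_of_gt hrPerp
      have hrr : rPar ≠ 0 := ne_of_gt hrPar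
      have h2r : (2 - rPar) ≠ 0 := by linarith
      field_simp
      ring
    rw [hsplit, Real.exp_add, Real.exp_add, hF1def, hF2def, hF3def, hCdef]
    ring
  simp only [hfact, hinn]
  -- change of variables: orthonormal basis coordinates
  have e1 : MeasurePreserving (⇑bas.repr.symm) volume volume :=
    bas.repr.symm.measurePreserving
  have emb1 : MeasurableEmbedding (⇑bas.repr.symm) :=
    bas.repr.symm.toHomeomorph.toMeasurableEquiv.measurableEmbedding
  have hstep1 := e1.setIntegral_preimage_emb emb1
    (fun v : EuclideanSpace ℝ (Fin 3) => F1 (bas.repr v 0) * (F2 (bas.repr v 1) * F3 (bas.repr v 2)))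
    {v : EuclideanSpace ℝ (Fin 3) | bas.repr v 0 < 0}
  simp only [LinearIsometryEquiv.apply_symm_apply] at hstep1
  have hpre1 : (⇑bas.repr.symm) ⁻¹' {v : EuclideanSpace ℝ (Fin 3) | bas.repr v 0 < 0}
      = {x : EuclideanSpace ℝ (Fin 3) | x 0 < 0} := by
    ext x
    simp [Set.mem_preimage]
  rw [hpre1] at hstep1
  rw [← hstep1]
  -- to the pi measure space
  set me := (MeasurableEquiv.toLp 2 (Fin 3 → ℝ)).symm with hmedef
  have e2 : MeasurePreserving (⇑me.symm) volume volume :=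
    (EuclideanSpace.volume_preserving_symm_measurableEquiv_toLp (Fin 3)).symm
  have hstep2 := e2.setIntegral_preimage_emb me.symm.measurableEmbedding
    (fun x : EuclideanSpace ℝ (Fin 3) => F1 (x 0) * (F2 (x 1) * F3 (x 2)))
    {x : EuclideanSpace ℝ (Fin 3) | x 0 < 0}
  rw [← hstep2]
  rw [show (⇑me.symm ⁻¹' {x : EuclideanSpace ℝ (Fin 3) | x 0 < 0})
      = {y : Fin 3 → ℝ | y 0 < 0} from rfl]
  show (∫ y in {y : Fin 3 → ℝ | y 0 < 0}, F1 (y 0) * (F2 (y 1) * F3 (y 2))) = 1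
  -- split off the first coordinate
  set q := MeasurableEquiv.piFinSuccAbove (fun _ : Fin 3 => ℝ) 0 with hqdef
  have e3 : MeasurePreserving (⇑q.symm) volume volume :=
    (volume_preserving_piFinSuccAbove (fun _ : Fin 3 => ℝ) 0).symm
  have hstep3 := e3.setIntegral_preimage_emb q.symm.measurableEmbedding
    (fun y : Fin 3 → ℝ => F1 (y 0) * (F2 (y 1) * F3 (y 2)))
    {y : Fin 3 → ℝ | y 0 < 0}
  have hstep3' : (∫ p in {p : ℝ × (Fin 2 → ℝ) | p.1 < 0}, F1 p.1 * (F2 (p.2 0) * F3 (p.2 1)))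
      = ∫ y in {y : Fin 3 → ℝ | y 0 < 0}, F1 (y 0) * (F2 (y 1) * F3 (y 2)) := hstep3
  rw [← hstep3']
  -- product structure
  have hsetp : {p : ℝ × (Fin 2 → ℝ) | p.1 < 0} = (Iio (0:ℝ)) ×ˢ (univ : Set (Fin 2 → ℝ)) := by
    ext p; simp
  rw [hsetp, Measure.volume_eq_prod, ← Measure.prod_restrict, Measure.restrict_univ]
  rw [integral_prod_mul (f := fun t => F1 t) (g := fun y : Fin 2 → ℝ => F2 (y 0) * F3 (y 1))]
  -- the 2-dimensional Gaussian integral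
  have hpi2 : (∫ y : Fin 2 → ℝ, F2 (y 0) * F3 (y 1)) = (∫ y : ℝ, F2 y) * (∫ z : ℝ, F3 z) := by
    have := MeasureTheory.integral_fin_nat_prod_eq_prod (n := 2) (E := fun _ => ℝ) (μ := fun _ => volume)
      (f := fun i : Fin 2 => if i = 0 then F2 else F3)
    simp only [Fin.prod_univ_two] at this
    simpa [← volume_pi] using this
  rw [hpi2]
  -- evaluate the three integrals
  have h2r : (0:ℝ) < 2 - rPar := by linarith
  have hs2 : (0:ℝ) < 2*Tw*rPar*(2-rPar) := by positivity
  have hI1 : (∫ t in Iio (0:ℝ), F1 t) = C * (Tw * rPerp) := by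
    rw [hF1def, integral_const_mul, perp_integral Tw rPerp u0 hTw hrPerp hrPerp' hu]
  have hI2 : (∫ y : ℝ, F2 y) = Real.sqrt (π * (2*Tw*rPar*(2-rPar))) := by
    rw [hF2def, gauss_shift (1/(2*Tw*rPar*(2-rPar))) a1]
    rw [one_div, div_inv_eq_mul]
  have hI3 : (∫ z : ℝ, F3 z) = Real.sqrt (π * (2*Tw*rPar*(2-rPar))) := by
    rw [hF3def, gauss_shift (1/(2*Tw*rPar*(2-rPar))) a2]
    rw [one_div, div_inv_eq_mul]
  rw [hI1, hI2, hI3, Real.mul_self_sqrt (by positivity)]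
  rw [hCdef]
  have hπ : Real.pi ≠ 0 := Real.pi_ne_zero
  field_simp
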